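/- arXiv:2505.03101 — 6 statements merged into one kernel-verified Lean document; each statement's English description precedes it below -/
import Mathlib

section
/- For every positive integer L, there exists a basis (β₁, ..., β_{2^L}) of GF(2^{2^L}) over GF(2) such that β₁ = 1 and β_i² - β_i = β_{i-1} for all i with 2 ≤ i ≤ 2^L. -/
open Polynomial

namespace CantorAux

variable (K : Type*) [Field K] [CharP K 2] [Algebra (ZMod 2) K]

/-- The Artin–Schreier map `x ↦ x ^ 2 - x` as a `ZMod 2`-linear map. -/
noncomputable def T : K →ₗ[ZMod 2] K :=
  AddMonoidHom.toZModLinearMap 2 ((frobenius K 2).toAddMonoidHom - AddMonoidHom.id K)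

variable {K}

lemma T_apply (x : K) : T K x = x ^ 2 - x := rfl

lemma T_pow_comp (a b : ℕ) (x : K) : (T K ^ (a + b)) x = (T K ^ a) ((T K ^ b) x) := by
  rw [pow_add, Module.End.mul_apply]

lemma T_pow_succ (b : ℕ) (x : K) : T K ((T K ^ b) x) = (T K ^ (1 + b)) x := by
  rw [T_pow_comp, pow_one]

lemma T_pow_two_pow (m : ℕ) (x : K) : (T K ^ (2 ^ m)) x = x ^ (2 ^ 2 ^ m) - x := by
  induction m generalizing x with
  | zero => simpa using T_apply x
  | succ m ih =>
    have h : (2:ℕ) ^ (m + 1) = 2 ^ m + 2 ^ m := by ring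
    rw [h, T_pow_comp, ih, ih]
    have hsub : (x ^ (2 ^ 2 ^ m) - x) ^ (2 ^ 2 ^ m)
        = (x ^ (2 ^ 2 ^ m)) ^ (2 ^ 2 ^ m) - x ^ (2 ^ 2 ^ m) :=
      sub_pow_char_pow ..
    have hexp : (x ^ (2 ^ 2 ^ m)) ^ (2 ^ 2 ^ m) = x ^ (2 ^ 2 ^ (m + 1)) := by
      rw [← pow_mul, ← pow_add, h]
    rw [hsub, hexp]
    have h2 := CharTwo.add_self_eq_zero (x ^ (2 ^ 2 ^ m))
    have h2x := CharTwo.add_self_eq_zero x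
    linear_combination h2x - h2

/-- `T ^ (2 ^ j - 1)` is given by evaluating a monic polynomial of degree `2 ^ (2 ^ j - 1)`. -/
lemma exists_poly (j : ℕ) : ∃ P : (ZMod 2)[X], P.Monic ∧ P.natDegree = 2 ^ (2 ^ j - 1) ∧
    ∀ x : K, aeval x P = (T K ^ (2 ^ j - 1)) x := by
  induction j with
  | zero => exact ⟨X, monic_X, by simp, by intro x; simp⟩
  | succ j ih =>
    obtain ⟨P, hm, hd, he⟩ := ih
    set q : ℕ := 2 ^ 2 ^ j with hq
    have hq2 : 2 ≤ q := by
      calc (2:ℕ) = 2 ^ 1 := by norm_num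
      _ ≤ q := Nat.pow_le_pow_right (by norm_num) Nat.one_le_two_pow
    have hmq : (X ^ q - X : (ZMod 2)[X]).Monic := by
      apply monic_X_pow_sub
      rw [degree_X]
      exact_mod_cast Nat.lt_of_lt_of_le one_lt_two hq2
    have hdq : (X ^ q - X : (ZMod 2)[X]).natDegree = q := by
      rw [natDegree_sub_eq_left_of_natDegree_lt, natDegree_X_pow]
      rw [natDegree_X, natDegree_X_pow]; omega
    have harith : 2 ^ j - 1 + 2 ^ j = 2 ^ (j + 1) - 1 := by
      have h1 : (1:ℕ) ≤ 2 ^ j := Nat.one_le_two_pow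
      have h2 : 2 ^ (j + 1) = 2 ^ j + 2 ^ j := by ring
      omega
    refine ⟨P.comp (X ^ q - X), hm.comp hmq (by rw [hdq]; omega), ?_, ?_⟩
    · rw [natDegree_comp, hd, hdq, hq, ← pow_add, harith]
    · intro x
      rw [aeval_comp, he]
      have hx : (aeval x (X ^ q - X : (ZMod 2)[X])) = (T K ^ (2 ^ j)) x := by
        rw [T_pow_two_pow]; simp [hq]
      rw [hx, ← T_pow_comp, harith]

/-- The abstract construction of a Cantor basis from a `γ` on which the `(n-1)`-st
power of the Artin–Schreier operator does not vanish. -/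
lemma key (V : Type*) [Field V] [CharP V 2] [Algebra (ZMod 2) V]
    (n : ℕ) (hn1 : 1 ≤ n)
    (hrank : Fintype.card (Fin n) = Module.finrank (ZMod 2) V)
    (hnil : ∀ x : V, (T V ^ n) x = 0)
    (γ : V) (hγ' : (T V ^ (n - 1)) γ ≠ 0) :
    ∃ b : Module.Basis (Fin n) (ZMod 2) V,
      (∀ h0 : (0:ℕ) < n, b ⟨0, h0⟩ = 1) ∧
      ∀ i : ℕ, ∀ h : i + 1 < n,
        (b ⟨i + 1, h⟩) ^ 2 - b ⟨i + 1, h⟩ = b ⟨i, by omega⟩ := by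
  classical
  haveI : Nonempty (Fin n) := ⟨⟨0, by omega⟩⟩
  set δ : V := (T V ^ (n - 1)) γ with hδ
  have hTδ : T V δ = 0 := by
    have h0 := hnil γ
    rw [show n = 1 + (n - 1) by omega] at h0
    rw [hδ, T_pow_succ]
    exact h0
  have hδ1 : δ = 1 := by
    have hmul : δ * (δ - 1) = 0 := by
      rw [T_apply] at hTδ
      linear_combination hTδ
    rcases mul_eq_zero.mp hmul with h | h
    · exact absurd h hγ'
    · exact sub_eq_zero.mp h
  set b : Fin n → V := fun i => (T V ^ (n - 1 - (i : ℕ))) γ with hb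
  have li : LinearIndependent (ZMod 2) b := by
    rw [Fintype.linearIndependent_iff]
    intro g hg
    have key : ∀ m : ℕ, ∀ j : Fin n, n - 1 - (j : ℕ) = m → g j = 0 := by
      intro m
      induction m using Nat.strong_induction_on with
      | _ m ih =>
        intro j hj
        have hjn : (j : ℕ) < n := j.isLt
        have h1 : ∑ i : Fin n, g i • (T V ^ (j : ℕ)) (b i) = 0 := by
          have h0 : (T V ^ (j : ℕ)) (∑ i : Fin n, g i • b i) = 0 := by rw [hg, map_zero]
          rw [map_sum] at h0
          simpa [map_smul] using h0
        have h2 : ∑ i : Fin n, g i • (T V ^ (j : ℕ)) (b i) = g j • (T V ^ (j : ℕ)) (b j) := by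
          refine Finset.sum_eq_single_of_mem j (Finset.mem_univ j) (fun i _ hij => ?_)
          have hin : (i : ℕ) < n := i.isLt
          rcases lt_or_gt_of_ne (fun hh : (i : ℕ) = (j : ℕ) => hij (Fin.ext hh)) with hlt' | hgt'
          · have hz : (T V ^ (j : ℕ)) (b i) = 0 := by
              show (T V ^ (j : ℕ)) ((T V ^ (n - 1 - (i : ℕ))) γ) = 0
              rw [← T_pow_comp, show (j : ℕ) + (n - 1 - (i : ℕ))
                  = ((j : ℕ) + (n - 1 - (i : ℕ)) - n) + n by omega, T_pow_comp, hnil, map_zero]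
            rw [hz, smul_zero]
          · have hi0 : g i = 0 := ih (n - 1 - (i : ℕ)) (by omega) i rfl
            rw [hi0, zero_smul]
        have h3 : (T V ^ (j : ℕ)) (b j) = 1 := by
          show (T V ^ (j : ℕ)) ((T V ^ (n - 1 - (j : ℕ))) γ) = 1
          rw [← T_pow_comp, show (j : ℕ) + (n - 1 - (j : ℕ)) = n - 1 by omega]
          exact hδ1
        rw [h2, h3] at h1
        rcases smul_eq_zero.mp h1 with h | h
        · exact h
        · exact absurd h one_ne_zero
    intro j
    exact key (n - 1 - (j : ℕ)) j rfl
  refine ⟨basisOfLinearIndependentOfCardEqFinrank li hrank, ?_, ?_⟩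
  · intro h0
    rw [coe_basisOfLinearIndependentOfCardEqFinrank]
    show (T V ^ (n - 1 - ((0 : ℕ)))) γ = 1
    simpa using hδ1
  · intro i h
    rw [coe_basisOfLinearIndependentOfCardEqFinrank]
    show ((T V ^ (n - 1 - (i + 1))) γ) ^ 2 - (T V ^ (n - 1 - (i + 1))) γ
        = (T V ^ (n - 1 - i)) γ
    rw [← T_apply, T_pow_succ, show 1 + (n - 1 - (i + 1)) = n - 1 - i by omega]

end CantorAux

open CantorAux

/-- For every positive integer `L`, there exists a Cantor basis of
`GF(2^(2^L))` over `GF(2)`: a basis `β₁, …, β_{2^L}` with `β₁ = 1` and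
`βᵢ² - βᵢ = β_{i-1}` for `2 ≤ i ≤ 2^L`. -/
theorem cantor_basis_exists (L : ℕ) (hL : 0 < L) :
    ∃ b : Module.Basis (Fin (2 ^ L)) (ZMod 2) (GaloisField 2 (2 ^ L)),
      b ⟨0, by positivity⟩ = 1 ∧
      ∀ i : ℕ, ∀ h : i + 1 < 2 ^ L,
        (b ⟨i + 1, h⟩) ^ 2 - b ⟨i + 1, h⟩ = b ⟨i, by omega⟩ := by
  classical
  have hn1 : 1 ≤ 2 ^ L := Nat.one_le_two_pow
  set V := GaloisField 2 (2 ^ L) with hV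
  letI : Fintype V := Fintype.ofFinite V
  have hcard : Fintype.card V = 2 ^ 2 ^ L := by
    rw [← Nat.card_eq_fintype_card]
    exact GaloisField.card 2 (2 ^ L) (Nat.one_le_iff_ne_zero.mp hn1)
  have hnil : ∀ x : V, (T V ^ 2 ^ L) x = 0 := by
    intro x
    rw [T_pow_two_pow, ← hcard, FiniteField.pow_card, sub_self]
  obtain ⟨P, hm, hd, he⟩ := exists_poly (K := V) L
  have hPmap : (P.map (algebraMap (ZMod 2) V)).Monic := hm.map _
  have hlt : (P.map (algebraMap (ZMod 2) V)).natDegree < Fintype.card V := by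
    rw [natDegree_map_eq_of_injective (algebraMap (ZMod 2) V).injective, hd, hcard]
    exact Nat.pow_lt_pow_right one_lt_two (by omega)
  obtain ⟨γ, hγ⟩ := Polynomial.exists_eval_ne_zero_of_natDegree_lt_card
      (P.map (algebraMap (ZMod 2) V)) hPmap.ne_zero
      (by rw [Cardinal.mk_fintype]; exact_mod_cast hlt)
  have hγ' : (T V ^ (2 ^ L - 1)) γ ≠ 0 := by
    rwa [eval_map, ← aeval_def, he] at hγ
  have hrank : Fintype.card (Fin (2 ^ L)) = Module.finrank (ZMod 2) V := by
    rw [Fintype.card_fin, GaloisField.finrank 2 (by omega : 2 ^ L ≠ 0)]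
  obtain ⟨b, hb0, hbs⟩ := key V (2 ^ L) hn1 hrank hnil γ hγ'
  exact ⟨b, hb0 (by positivity), hbs⟩
end

section
/- Let k be a positive integer and f(x) a polynomial of degree < 2^m over an algebraic extension of GF(2), with k ≤ m. Then there exists a unique tuple (f̂₀, ..., f̂_{2^k - 1}) of polynomials, each of degree < 2^{m-k}, such that f(x) = Σ_{i=0}^{2^k - 1} x^i · f̂_i(x^{2^k} - x). -/
open Polynomial

section Aux

variable {F : Type*} [Field F]

/-- Coefficient of an explicit sum `∑ j, C (a j) * X^j`. -/
lemma gm_coeff_rep (D : ℕ) (a : Fin D → F) (i : Fin D) :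
    (∑ j : Fin D, C (a j) * X ^ (j : ℕ)).coeff (i : ℕ) = a i := by
  rw [finset_sum_coeff]
  rw [Finset.sum_eq_single i]
  · simp [coeff_C_mul, coeff_X_pow]
  · intro j _ hj
    have : ¬ ((i : ℕ) = (j : ℕ)) := fun h => hj (Fin.ext h.symm)
    simp [coeff_C_mul, coeff_X_pow, this]
  · simp

/-- Degree bound for `∑ j, C (a j) * X^j`. -/
lemma gm_deg_rep (D : ℕ) (a : Fin D → F) :
    (∑ j : Fin D, C (a j) * X ^ (j : ℕ)).degree < (D : WithBot ℕ) := by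
  refine lt_of_le_of_lt (degree_sum_le _ _) ?_
  rw [Finset.sup_lt_iff (by exact_mod_cast WithBot.bot_lt_coe D)]
  intro j _
  refine lt_of_le_of_lt (degree_C_mul_X_pow_le _ _) ?_
  exact_mod_cast j.isLt

/-- A polynomial of degree `< D` equals its representation as a sum of monomials. -/
lemma gm_rep (D : ℕ) (p : F[X]) (hp : p.degree < (D : WithBot ℕ)) :
    ∑ i : Fin D, C (p.coeff i) * X ^ (i : ℕ) = p := by
  rcases eq_or_ne p 0 with rfl | hp0
  · simp
  · have hnd : p.natDegree < D := (natDegree_lt_iff_degree_lt hp0).mpr hp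
    rw [Fin.sum_univ_eq_sum_range (fun i => C (p.coeff i) * X ^ i)]
    simp only [C_mul_X_pow_eq_monomial]
    exact (p.as_sum_range' D hnd).symm

/-- Uniqueness of `q`-adic expansions with coefficients of degree `< deg q`. -/
lemma gm_qadic_unique (q : F[X]) (hq : q.Monic) :
    ∀ (N : ℕ) (c : Fin N → F[X]), (∀ j, (c j).degree < q.degree) →
      (∑ j : Fin N, c j * q ^ (j : ℕ)) = 0 → ∀ j, c j = 0 := by
  intro N
  induction N with
  | zero => intro c _ _ j; exact j.elim0
  | succ N ih =>
    intro c hc hsum j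
    rw [Fin.sum_univ_succ] at hsum
    simp only [Fin.val_zero, pow_zero, mul_one, Fin.val_succ] at hsum
    have hfac : (∑ i : Fin N, c i.succ * q ^ ((i : ℕ) + 1))
        = q * ∑ i : Fin N, c i.succ * q ^ (i : ℕ) := by
      rw [Finset.mul_sum]
      exact Finset.sum_congr rfl fun i _ => by ring
    rw [hfac] at hsum
    have hdvd : q ∣ c 0 := ⟨-(∑ i : Fin N, c i.succ * q ^ (i : ℕ)), by linear_combination hsum⟩
    have h0 : c 0 = 0 := eq_zero_of_dvd_of_degree_lt hdvd (hc 0)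
    have hqne : q ≠ 0 := hq.ne_zero
    have hrest : (∑ i : Fin N, c i.succ * q ^ (i : ℕ)) = 0 := by
      have h2 : q * (∑ i : Fin N, c i.succ * q ^ (i : ℕ)) = 0 := by
        rw [h0, zero_add] at hsum; exact hsum
      exact (mul_eq_zero.mp h2).resolve_left hqne
    have hz := ih (fun i => c i.succ) (fun i => hc i.succ) hrest
    refine Fin.cases h0 (fun i => hz i) j

/-- Existence of `q`-adic expansions. -/
lemma gm_qadic_exists (q : F[X]) (hq : q.Monic) (hq0 : 0 < q.natDegree) :
    ∀ (N : ℕ) (f : F[X]), f.degree < ((q.natDegree * N : ℕ) : WithBot ℕ) →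
      ∃ c : Fin N → F[X], (∀ j, (c j).degree < q.degree) ∧
        f = ∑ j : Fin N, c j * q ^ (j : ℕ) := by
  intro N
  induction N with
  | zero =>
    intro f hf
    have hf0 : f = 0 := by
      by_contra h
      have h1 : (0 : WithBot ℕ) ≤ f.degree := zero_le_degree_iff.mpr h
      simp only [Nat.mul_zero, Nat.cast_zero] at hf
      exact absurd hf (not_lt.mpr h1)
    exact ⟨fun j => j.elim0, fun j => j.elim0, by simp [hf0]⟩
  | succ N ih =>
    intro f hf
    have hne : (0 : F) ≠ 1 := zero_ne_one
    have hmod : (f %ₘ q).degree < q.degree := degree_modByMonic_lt f hq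
    have hdiv : (f /ₘ q).degree < ((q.natDegree * N : ℕ) : WithBot ℕ) := by
      by_cases hz : f /ₘ q = 0
      · rw [hz, degree_zero]; exact WithBot.bot_lt_coe _
      · have hfz : f ≠ 0 := by
          intro h; rw [h] at hz; simp at hz
        have hfd : f.natDegree < q.natDegree * (N + 1) := by
          exact (natDegree_lt_iff_degree_lt hfz).mpr hf
        have hge : ¬ f.degree < q.degree := by
          intro h; exact hz ((divByMonic_eq_zero_iff hq).mpr h)
        have hge' : q.natDegree ≤ f.natDegree := by
          by_contra h
          push_neg at h
          exact hge (degree_lt_degree h)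
        have hnd : (f /ₘ q).natDegree = f.natDegree - q.natDegree :=
          natDegree_divByMonic f hq
        rw [← natDegree_lt_iff_degree_lt hz, hnd]
        have hms : q.natDegree * (N + 1) = q.natDegree * N + q.natDegree := Nat.mul_succ _ _
        omega
    obtain ⟨c, hc, hsum⟩ := ih (f /ₘ q) hdiv
    refine ⟨Fin.cons (f %ₘ q) c, ?_, ?_⟩
    · intro j
      refine Fin.cases ?_ ?_ j
      · simpa using hmod
      · intro i; simpa using hc i
    · rw [Fin.sum_univ_succ]
      simp only [Fin.cons_zero, Fin.cons_succ, Fin.val_zero, pow_zero, mul_one, Fin.val_succ]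
      have : (∑ i : Fin N, c i * q ^ ((i : ℕ) + 1))
          = q * ∑ i : Fin N, c i * q ^ (i : ℕ) := by
        rw [Finset.mul_sum]
        exact Finset.sum_congr rfl fun i _ => by ring
      rw [this, ← hsum, modByMonic_add_div f q]

/-- The key double-sum swap identity. -/
lemma gm_swap (D N : ℕ) (q : F[X]) (c : Fin N → F[X])
    (hc : ∀ j, (c j).degree < (D : WithBot ℕ)) :
    ∑ i : Fin D, X ^ (i : ℕ) * ((∑ j : Fin N, C ((c j).coeff i) * X ^ (j : ℕ)).comp q)
      = ∑ j : Fin N, c j * q ^ (j : ℕ) := by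
  have hcomp : ∀ i : Fin D, (∑ j : Fin N, C ((c j).coeff i) * X ^ (j : ℕ)).comp q
      = ∑ j : Fin N, C ((c j).coeff i) * q ^ (j : ℕ) := by
    intro i
    simp only [Polynomial.comp, eval₂_finset_sum, eval₂_mul, eval₂_C, eval₂_X_pow]
  calc _
      = ∑ i : Fin D, ∑ j : Fin N, C ((c j).coeff i) * X ^ (i : ℕ) * q ^ (j : ℕ) := by
        refine Finset.sum_congr rfl fun i _ => ?_
        rw [hcomp i, Finset.mul_sum]
        exact Finset.sum_congr rfl fun j _ => by ring
    _ = ∑ j : Fin N, (∑ i : Fin D, C ((c j).coeff i) * X ^ (i : ℕ)) * q ^ (j : ℕ) := by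
        rw [Finset.sum_comm]
        exact Finset.sum_congr rfl fun j _ => by rw [Finset.sum_mul]
    _ = ∑ j : Fin N, c j * q ^ (j : ℕ) := by
        refine Finset.sum_congr rfl fun j _ => ?_
        rw [gm_rep D (c j) (hc j)]

end Aux

/-- Gao–Mateer expansion: over an algebraic extension `K` of `GF(2)`, every
polynomial `f` of degree `< 2^m` has a unique expansion
`f(x) = ∑_{i<2^k} xⁱ · f̂ᵢ(x^(2^k) - x)` with each `f̂ᵢ` of degree `< 2^(m-k)`,
for `1 ≤ k ≤ m`. -/
theorem gao_mateer_expansion (K : Type*) [Field K] [Algebra (ZMod 2) K]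
    [Algebra.IsAlgebraic (ZMod 2) K]
    (k m : ℕ) (hk : 0 < k) (hkm : k ≤ m)
    (f : K[X]) (hf : f.degree < ((2 ^ m : ℕ) : WithBot ℕ)) :
    ∃! g : Fin (2 ^ k) → K[X],
      (∀ i, (g i).degree < ((2 ^ (m - k) : ℕ) : WithBot ℕ)) ∧
      f = ∑ i : Fin (2 ^ k), X ^ (i : ℕ) * (g i).comp (X ^ (2 ^ k) - X) := by
  set D : ℕ := 2 ^ k with hD
  set N : ℕ := 2 ^ (m - k) with hN
  set q : K[X] := X ^ D - X with hq
  have hD2 : 2 ≤ D := by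
    calc 2 = 2 ^ 1 := rfl
    _ ≤ 2 ^ k := Nat.pow_le_pow_right (by norm_num) hk
  have hdX : (X : K[X]).degree < (X ^ D : K[X]).degree := by
    rw [degree_X, degree_X_pow]
    exact_mod_cast hD2
  have hdq : q.degree = (D : ℕ) := by
    rw [hq, degree_sub_eq_left_of_degree_lt hdX, degree_X_pow]
  have hnq : q.natDegree = D := natDegree_eq_of_degree_eq_some hdq
  have hDne : D ≠ 1 := Nat.ne_of_gt (lt_of_lt_of_le one_lt_two hD2)
  have hDne' : ¬ (1 = D) := fun h => hDne h.symm
  have hqm : q.Monic := by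
    unfold Polynomial.Monic Polynomial.leadingCoeff
    rw [hnq, hq]
    rw [coeff_sub, coeff_X_pow]
    simp [coeff_X, hDne, hDne']
  have hDN : D * N = 2 ^ m := by
    rw [hD, hN, ← pow_add]
    congr 1
    omega
  -- existence
  obtain ⟨c, hc, hsum⟩ := gm_qadic_exists q hqm (by rw [hnq]; omega) N f (by rwa [hnq, hDN])
  have hc' : ∀ j, (c j).degree < (D : WithBot ℕ) := fun j => by
    have := hc j; rwa [hdq] at this
  refine ⟨fun i => ∑ j : Fin N, C ((c j).coeff i) * X ^ (j : ℕ), ⟨?_, ?_⟩, ?_⟩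
  · intro i
    exact gm_deg_rep N _
  · rw [hsum, ← gm_swap D N q c hc']
  · -- uniqueness
    rintro g ⟨hgdeg, hgsum⟩
    funext i
    -- build the q-adic coefficients of g
    set cg : Fin N → K[X] := fun j => ∑ i' : Fin D, C ((g i').coeff j) * X ^ ((i' : ℕ)) with hcg
    have hcgdeg : ∀ j, (cg j).degree < (D : WithBot ℕ) := fun j => gm_deg_rep D _
    have hgrep : ∀ i' : Fin D, ∑ j : Fin N, C ((cg j).coeff i') * X ^ (j : ℕ) = g i' := by
      intro i'
      have : ∀ j : Fin N, (cg j).coeff i' = (g i').coeff j := fun j =>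
        gm_coeff_rep D (fun i'' => (g i'').coeff j) i'
      calc ∑ j : Fin N, C ((cg j).coeff i') * X ^ (j : ℕ)
          = ∑ j : Fin N, C ((g i').coeff j) * X ^ (j : ℕ) := by
            exact Finset.sum_congr rfl fun j _ => by rw [this j]
        _ = g i' := gm_rep N (g i') (hgdeg i')
    have hgq : ∑ j : Fin N, cg j * q ^ (j : ℕ) = f := by
      rw [← gm_swap D N q cg hcgdeg]
      rw [hgsum]
      exact Finset.sum_congr rfl fun i' _ => by rw [hgrep i']
    -- compare with c
    have hdiff : ∑ j : Fin N, (cg j - c j) * q ^ (j : ℕ) = 0 := by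
      have : ∑ j : Fin N, (cg j - c j) * q ^ (j : ℕ)
          = (∑ j : Fin N, cg j * q ^ (j : ℕ)) - ∑ j : Fin N, c j * q ^ (j : ℕ) := by
        rw [← Finset.sum_sub_distrib]
        exact Finset.sum_congr rfl fun j _ => by ring
      rw [this, hgq, ← hsum, sub_self]
    have hdeg' : ∀ j, ((cg j - c j)).degree < q.degree := by
      intro j
      rw [hdq]
      exact lt_of_le_of_lt (degree_sub_le _ _) (max_lt (hcgdeg j) (hc' j))
    have hcc : ∀ j, cg j = c j := by
      intro j
      have := gm_qadic_unique q hqm N (fun j => cg j - c j) hdeg' hdiff j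
      linear_combination this
    -- conclude
    rw [← hgrep i]
    refine Finset.sum_congr rfl fun j _ => ?_
    rw [hcc j]
end

section
/- Let K be a field of characteristic 2, k a positive integer, and f a polynomial over K with Gao-Mateer expansion f(x) = Σ_{i=0}^{2^k - 1} x^i f̂_i(x^{2^k} - x). For any c ∈ K, the remainder of f modulo the polynomial x^{2^k} - x - c equals Σ_{i=0}^{2^k - 1} f̂_i(c) · x^i. -/
open Polynomial

/-- Remaindering mechanism: if `f(x) = ∑_{i<2^k} xⁱ · f̂ᵢ(x^(2^k) - x)` is the
Gao–Mateer expansion of `f` over a field `K` of characteristic 2, then for any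
`c ∈ K` the remainder of `f` modulo `x^(2^k) - x - c` is
`∑_{i<2^k} f̂ᵢ(c) · xⁱ`. -/
theorem gao_mateer_remainder (K : Type*) [Field K] [CharP K 2]
    (k : ℕ) (hk : 0 < k) (f : K[X]) (fh : Fin (2 ^ k) → K[X])
    (hexp : f = ∑ i : Fin (2 ^ k), X ^ (i : ℕ) * (fh i).comp (X ^ (2 ^ k) - X))
    (c : K) :
    f %ₘ (X ^ (2 ^ k) - X - C c) =
      ∑ i : Fin (2 ^ k), C ((fh i).eval c) * X ^ (i : ℕ) := by
  set m : K[X] := X ^ (2 ^ k) - X - C c with hm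
  have h2k : 1 < 2 ^ k := Nat.one_lt_two_pow hk.ne'
  have hmonic : m.Monic := by
    have : m = X ^ (2 ^ k) - (X + C c) := by ring
    rw [this]
    apply monic_X_pow_sub
    calc degree (X + C c) ≤ 1 := by
          apply le_trans (degree_add_le _ _); simp [degree_C_le.trans]
      _ < (2 ^ k : ℕ) := by exact_mod_cast h2k
  set r : K[X] := ∑ i : Fin (2 ^ k), C ((fh i).eval c) * X ^ (i : ℕ) with hr
  have hdvd : m ∣ f - r := by
    rw [hexp, hr, ← Finset.sum_sub_distrib]
    apply Finset.dvd_sum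
    intro i _
    have : X ^ (i : ℕ) * (fh i).comp (X ^ (2 ^ k) - X) - C ((fh i).eval c) * X ^ (i : ℕ)
        = X ^ (i : ℕ) * ((fh i).comp (X ^ (2 ^ k) - X) - (fh i).comp (C c)) := by
      rw [comp_C]; ring
    rw [this]
    apply Dvd.dvd.mul_left
    have key : (X ^ (2 ^ k) - X) - C c ∣
        ((fh i).map C).eval (X ^ (2 ^ k) - X) - ((fh i).map C).eval (C c) :=
      sub_dvd_eval_sub _ _ _
    simpa [comp, eval₂_eq_eval_map] using key
  have := modByMonic_eq_of_dvd_sub hmonic hdvd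
  rw [this, hr, (modByMonic_eq_self_iff hmonic).2]
  have hdegm : m.degree = (2 ^ k : ℕ) := by
    have : m = X ^ (2 ^ k) - (X + C c) := by ring
    rw [this, degree_sub_eq_left_of_degree_lt, degree_X_pow]
    rw [degree_X_pow]
    calc degree (X + C c) ≤ 1 := by
          apply le_trans (degree_add_le _ _); simp [degree_C_le.trans]
      _ < (2 ^ k : ℕ) := by exact_mod_cast h2k
  rw [hdegm]
  exact degree_sum_fin_lt _
end

section
/- With the notation of the Cantor basis setup: every element of W_{2^{l-1}} satisfies x^{2^{2^{l-1}}} = x; that is, W_{2^{l-1}} ⊆ GF(2^{2^{l-1}}) inside GF(2^{2^L}) for 1 ≤ 2^{l-1} ≤ 2^L. -/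
lemma cantor_frob (L : ℕ) (b : Module.Basis (Fin (2 ^ L)) (ZMod 2) (GaloisField 2 (2 ^ L)))
    (hb1 : b ⟨0, by positivity⟩ = 1)
    (hb : ∀ i : ℕ, ∀ h : i + 1 < 2 ^ L,
      (b ⟨i + 1, h⟩) ^ 2 - b ⟨i + 1, h⟩ = b ⟨i, by omega⟩) :
    ∀ k j : ℕ, ∀ hj : j < 2 ^ L,
      (b ⟨j, hj⟩) ^ (2 ^ 2 ^ k) =
        if _ : 2 ^ k ≤ j then
          b ⟨j, hj⟩ + b ⟨j - 2 ^ k, Nat.lt_of_le_of_lt (Nat.sub_le j _) hj⟩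
        else b ⟨j, hj⟩ := by
  have hself : ∀ x : GaloisField 2 (2 ^ L), x + x = 0 := fun x => CharTwo.add_self_eq_zero x
  intro k
  induction k with
  | zero =>
    intro j hj
    rcases Nat.eq_zero_or_pos j with rfl | hjpos
    · simp only [Nat.not_succ_le_zero, dif_neg, not_false_iff, pow_zero, pow_one]
      rw [show (⟨0, hj⟩ : Fin (2 ^ L)) = ⟨0, by positivity⟩ from rfl, hb1]
      norm_num
    · have h1 : j - 1 + 1 = j := by omega
      have key := hb (j - 1) (by omega)
      rw [dif_pos (by omega : 2 ^ 0 ≤ j)]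
      have e1 : (⟨j - 1 + 1, by omega⟩ : Fin (2 ^ L)) = ⟨j, hj⟩ := by simp [h1]
      have e2 : (⟨j - 1, by omega⟩ : Fin (2 ^ L)) =
          ⟨j - 2 ^ 0, Nat.lt_of_le_of_lt (Nat.sub_le j _) hj⟩ := by simp
      rw [e1, e2] at key
      have key2 := sub_eq_iff_eq_add.mp key
      norm_num
      rw [key2]; ring_nf
  | succ k ih =>
    intro j hj
    have htwo : 2 ^ (k + 1) = 2 ^ k + 2 ^ k := by rw [pow_succ]; ring
    have hpow : (2 : ℕ) ^ 2 ^ (k + 1) = 2 ^ 2 ^ k * 2 ^ 2 ^ k := by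
      rw [htwo, pow_add]
    rw [hpow, pow_mul, ih j hj]
    by_cases h1 : 2 ^ k ≤ j
    · rw [dif_pos h1, add_pow_char_pow, ih j hj,
        ih (j - 2 ^ k) (Nat.lt_of_le_of_lt (Nat.sub_le j _) hj), dif_pos h1]
      by_cases h2 : 2 ^ k ≤ j - 2 ^ k
      · have h3 : 2 ^ (k + 1) ≤ j := by omega
        rw [dif_pos h2, dif_pos h3]
        have e : (⟨j - 2 ^ k - 2 ^ k, Nat.lt_of_le_of_lt (Nat.sub_le _ _) (Nat.lt_of_le_of_lt (Nat.sub_le j _) hj)⟩ : Fin (2 ^ L)) =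
            ⟨j - 2 ^ (k + 1), Nat.lt_of_le_of_lt (Nat.sub_le j _) hj⟩ := by
          simp only [Fin.mk.injEq]; omega
        rw [e]
        linear_combination hself (b ⟨j - 2 ^ k, Nat.lt_of_le_of_lt (Nat.sub_le j _) hj⟩)
      · have h3 : ¬ 2 ^ (k + 1) ≤ j := by omega
        rw [dif_neg h2, dif_neg h3]
        linear_combination hself (b ⟨j - 2 ^ k, Nat.lt_of_le_of_lt (Nat.sub_le j _) hj⟩)
    · rw [dif_neg h1, ih j hj, dif_neg h1, dif_neg (show ¬ 2 ^ (k + 1) ≤ j by omega)]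

/-- For a Cantor basis of `GF(2^(2^L))`, every element of the subspace
`W_{2^(l-1)}` spanned by the first `2^(l-1)` basis vectors satisfies
`x^(2^(2^(l-1))) = x`, i.e. `W_{2^(l-1)}` is contained in the subfield
`GF(2^(2^(l-1)))` of `GF(2^(2^L))`. -/
theorem cantor_span_subfield (L l : ℕ) (hL : 0 < L) (hl : 1 ≤ l)
    (hlL : 2 ^ (l - 1) ≤ 2 ^ L)
    (b : Module.Basis (Fin (2 ^ L)) (ZMod 2) (GaloisField 2 (2 ^ L)))
    (hb1 : b ⟨0, by positivity⟩ = 1)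
    (hb : ∀ i : ℕ, ∀ h : i + 1 < 2 ^ L,
      (b ⟨i + 1, h⟩) ^ 2 - b ⟨i + 1, h⟩ = b ⟨i, by omega⟩) :
    ∀ x ∈ Submodule.span (ZMod 2)
        (b '' {j : Fin (2 ^ L) | (j : ℕ) < 2 ^ (l - 1)}),
      x ^ (2 ^ (2 ^ (l - 1))) = x := by
  intro x hx
  induction hx using Submodule.span_induction with
  | mem y hy =>
    obtain ⟨j, hj, rfl⟩ := hy
    have hj' : (j : ℕ) < 2 ^ (l - 1) := hj
    have := cantor_frob L b hb1 hb (l - 1) j j.isLt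
    rw [show (⟨(j : ℕ), j.isLt⟩ : Fin (2 ^ L)) = j from Fin.eta j j.isLt] at this
    rw [this, dif_neg (by omega)]
  | zero => exact zero_pow (by positivity)
  | add y z _ _ hy hz => rw [add_pow_char_pow, hy, hz]
  | smul c y _ hy =>
    rcases (by decide : ∀ c : ZMod 2, c = 0 ∨ c = 1) c with rfl | rfl
    · simp [zero_pow (show (2:ℕ) ^ 2 ^ (l-1) ≠ 0 by positivity)]
    · simpa using hy
end

section
/- Define E₀ : ℕ → ℕ by E₀(1) = 1 and, for m > 1 with l = ⌈log₂ m⌉, suppose E₀(m) ≤ 2^{m - 2^{l-1}}·E₀(2^{l-1}) + 2^{2^{l-1}}·E₀(m - 2^{l-1}). Then E₀(m) ≤ 2^{m-1}·m for all m ≥ 1. -/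
/-- If `E₀(1) = 1` and for `m > 1` with `l = ⌈log₂ m⌉`,
`E₀(m) ≤ 2^(m - 2^(l-1))·E₀(2^(l-1)) + 2^(2^(l-1))·E₀(m - 2^(l-1))`,
then `E₀(m) ≤ 2^(m-1)·m` for all `m ≥ 1`. -/
theorem eval_mult_count (E : ℕ → ℕ) (h1 : E 1 = 1)
    (hrec : ∀ m : ℕ, 1 < m → ∀ l : ℕ, l = Nat.clog 2 m →
      E m ≤ 2 ^ (m - 2 ^ (l - 1)) * E (2 ^ (l - 1)) +
            2 ^ (2 ^ (l - 1)) * E (m - 2 ^ (l - 1))) :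
    ∀ m : ℕ, 1 ≤ m → E m ≤ 2 ^ (m - 1) * m := by
  intro m
  induction m using Nat.strong_induction_on with
  | _ m ih =>
    intro hm
    rcases eq_or_lt_of_le hm with h | h
    · simp [← h, h1]
    · set l := Nat.clog 2 m with hl
      have h4 := hrec m h l hl
      obtain ⟨k, hk⟩ : ∃ k, 2 ^ (l - 1) = k := ⟨_, rfl⟩
      rw [hk] at h4
      have hkm : k < m := by
        rw [← hk, hl]
        exact Nat.pow_pred_clog_lt_self one_lt_two h
      have hk1 : 1 ≤ k := hk ▸ Nat.one_le_two_pow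
      have hmk1 : 1 ≤ m - k := Nat.le_sub_of_add_le (by omega)
      have hmk : m - k < m := by omega
      have h2 := ih k hkm hk1
      have h3 := ih (m - k) hmk hmk1
      calc E m ≤ 2 ^ (m - k) * E k + 2 ^ k * E (m - k) := h4
        _ ≤ 2 ^ (m - k) * (2 ^ (k - 1) * k) + 2 ^ k * (2 ^ (m - k - 1) * (m - k)) := by
            exact Nat.add_le_add (Nat.mul_le_mul_left _ h2) (Nat.mul_le_mul_left _ h3)
        _ = 2 ^ (m - 1) * k + 2 ^ (m - 1) * (m - k) := by
            rw [← mul_assoc, ← mul_assoc, ← pow_add, ← pow_add,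
              show m - k + (k - 1) = m - 1 by omega, show k + (m - k - 1) = m - 1 by omega]
        _ = 2 ^ (m - 1) * m := by rw [← Nat.mul_add]; congr 1; omega
end

section
/- Let K be a field of characteristic 2, k ≥ 1, and let c₀, ..., c_{N-1} ∈ K be distinct elements. Given polynomials r₀, ..., r_{N-1} ∈ K[x], each of degree < 2^k, there exists a polynomial f ∈ K[x] of degree < N·2^k whose remainder modulo x^{2^k} - x - c_j is r_j for each j, constructed as follows: writing r_j(x) = Σ_i r_{ij} x^i, choose for each i a polynomial t_i of degree < N with t_i(c_j) = r_{ij} for all j, and set f(x) = Σ_{i=0}^{2^k-1} t_i(x^{2^k} - x)·x^i. Then f mod (x^{2^k} - x - c_j) = r_j for all j. -/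
open Polynomial

private lemma aux_sum_repr {K : Type*} [Field K] (p : K[X]) (n : ℕ)
    (h : p.degree < (n : WithBot ℕ)) :
    p = ∑ i : Fin n, C (p.coeff i) * X ^ (i : ℕ) := by
  rcases eq_or_ne p 0 with h0 | h0
  · simp [h0]
  · have hn : p.natDegree < n := (natDegree_lt_iff_degree_lt h0).mpr h
    rw [Fin.sum_univ_eq_sum_range (fun m => C (p.coeff m) * X ^ m) n]
    conv_lhs => rw [p.as_sum_range' n hn]
    simp [C_mul_X_pow_eq_monomial]

private lemma aux_dvd_comp {K : Type*} [Field K] (g p : K[X]) (a : K) :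
    g - C a ∣ p.comp g - C (p.eval a) := by
  have h : X - C a ∣ p - C (p.eval a) := by
    rw [dvd_iff_isRoot]; simp
  have := map_dvd (aeval g) h
  simpa [comp_eq_aeval, map_sub, aeval_X, aeval_C, ← C_eq_algebraMap] using this

/-- Dividend reconstruction: over a field `K` of characteristic 2, given
distinct `c₀, …, c_{N-1}` and polynomials `r₀, …, r_{N-1}` of degree `< 2^k`,
if `tᵢ` are polynomials of degree `< N` with `tᵢ(cⱼ) = coeff i (rⱼ)`, then
`f(x) = ∑_{i<2^k} tᵢ(x^(2^k) - x)·xⁱ` has degree `< N·2^k` and its remainder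
modulo `x^(2^k) - x - cⱼ` is `rⱼ` for every `j`. -/
theorem dividend_reconstruction (K : Type*) [Field K] [CharP K 2]
    (k N : ℕ) (hk : 0 < k)
    (c : Fin N → K) (hc : Function.Injective c)
    (r : Fin N → K[X]) (hr : ∀ j, (r j).degree < ((2 ^ k : ℕ) : WithBot ℕ))
    (t : Fin (2 ^ k) → K[X]) (ht : ∀ i, (t i).degree < (N : WithBot ℕ))
    (htc : ∀ i j, (t i).eval (c j) = (r j).coeff i)
    (f : K[X])
    (hf : f = ∑ i : Fin (2 ^ k), (t i).comp (X ^ (2 ^ k) - X) * X ^ (i : ℕ)) :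
    f.degree < ((N * 2 ^ k : ℕ) : WithBot ℕ) ∧
      ∀ j, f %ₘ (X ^ (2 ^ k) - X - C (c j)) = r j := by
  have h2 : 1 < 2 ^ k := Nat.one_lt_two_pow (by omega)
  set g : K[X] := X ^ (2 ^ k) - X with hg
  have hdegg : g.degree = ((2 ^ k : ℕ) : WithBot ℕ) := by
    rw [hg, degree_sub_eq_left_of_degree_lt]
    · exact degree_X_pow _
    · rw [degree_X, degree_X_pow]; exact_mod_cast h2
  have hndegg : g.natDegree = 2 ^ k := natDegree_eq_of_degree_eq_some hdegg
  constructor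
  · rw [hf]
    refine lt_of_le_of_lt (degree_sum_le _ _) ?_
    rw [Finset.sup_lt_iff (WithBot.bot_lt_coe _)]
    intro i _
    rcases eq_or_ne (t i) 0 with h0 | h0
    · simp [h0]; exact WithBot.bot_lt_coe _
    · have hN : (t i).natDegree < N := (natDegree_lt_iff_degree_lt h0).mpr (ht i)
      calc ((t i).comp g * X ^ (i : ℕ)).degree
          ≤ ((t i).comp g).degree + ((X : K[X]) ^ (i : ℕ)).degree := degree_mul_le _ _
        _ ≤ (((t i).natDegree * 2 ^ k + i : ℕ) : WithBot ℕ) := by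
            rw [degree_X_pow]
            have h1 : ((t i).comp g).degree ≤ (((t i).natDegree * 2 ^ k : ℕ) : WithBot ℕ) := by
              refine le_trans (degree_le_natDegree) ?_
              rw [natDegree_comp, hndegg]
            push_cast
            exact add_le_add h1 le_rfl
        _ < ((N * 2 ^ k : ℕ) : WithBot ℕ) := by
            have : (t i).natDegree * 2 ^ k + (i : ℕ) < N * 2 ^ k := by
              have hi : (i : ℕ) < 2 ^ k := i.isLt
              calc (t i).natDegree * 2 ^ k + (i : ℕ)
                  < (t i).natDegree * 2 ^ k + 2 ^ k := by omega
                _ = ((t i).natDegree + 1) * 2 ^ k := by ring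
                _ ≤ N * 2 ^ k := Nat.mul_le_mul_right _ (by omega)
            exact_mod_cast this
  · intro j
    set q : K[X] := X ^ (2 ^ k) - X - C (c j) with hq
    have hmon : q.Monic := by
      have e : q = X ^ (2 ^ k - 1 + 1) - (X + C (c j)) := by
        rw [hq, Nat.sub_add_cancel (by omega)]; ring
      have hd : degree (X + C (c j) : K[X]) < ((2 ^ k - 1 + 1 : ℕ) : WithBot ℕ) := by
        refine lt_of_le_of_lt (le_trans (degree_add_le _ _)
          (max_le (by rw [degree_X]) (le_trans degree_C_le (by norm_num)))) ?_
        rw [Nat.sub_add_cancel (by omega)]; exact_mod_cast h2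
      rw [e]; exact monic_X_pow_sub hd
    have hdegq : q.degree = ((2 ^ k : ℕ) : WithBot ℕ) := by
      rw [hq]
      rw [show (X ^ (2 ^ k) - X - C (c j) : K[X]) = X ^ (2^k) - (X + C (c j)) by ring]
      rw [degree_sub_eq_left_of_degree_lt]
      · exact degree_X_pow _
      · rw [degree_X_pow]
        calc degree (X + C (c j) : K[X]) ≤ 1 := by
              refine le_trans (degree_add_le _ _) (max_le ?_ ?_)
              · rw [degree_X]
              · exact le_trans degree_C_le (by norm_num)
          _ < ((2 ^ k : ℕ) : WithBot ℕ) := by exact_mod_cast h2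
    have hdvd : q ∣ f - r j := by
      have hrj : r j = ∑ i : Fin (2 ^ k), C ((r j).coeff i) * X ^ (i : ℕ) :=
        aux_sum_repr (r j) (2 ^ k) (hr j)
      rw [hf, hrj, ← Finset.sum_sub_distrib]
      refine Finset.dvd_sum fun i _ => ?_
      rw [← sub_mul]
      refine Dvd.dvd.mul_right ?_ _
      have := aux_dvd_comp g (t i) (c j)
      rw [htc i j] at this
      simpa [hq, hg] using this
    rw [modByMonic_eq_of_dvd_sub hmon hdvd]
    rw [modByMonic_eq_self_iff hmon]
    rw [hdegq]; exact hr j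
end
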